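/- arXiv:1603.09157 — 3 statements merged into one kernel-verified Lean document; each statement's English description precedes it below -/
import Mathlib

section
/- Let T ≥ 1 and let n_x, n_u, n_w, n_y ≥ 1. Let E, F, H, P be real n_x×n_x matrices with P symmetric positive definite, K a real n_x×n_u matrix, L a real n_x×n_w matrix, C a real n_y×n_x matrix, D a real n_y×n_u matrix, and Σ_v a real symmetric positive definite n_y×n_y matrix. Suppose the block matrix M = [[HᵀE + EᵀH − P, FᵀH, Cᵀ], [HᵀF, P, 0], [C, 0, Σ_v]] is positive definite. Then for arbitrary sequences u : {1,…,T} → ℝ^{n_u}, y : {1,…,T} → ℝ^{n_y}, w : {1,…,T} → ℝ^{n_w}, initial state x̃₁ ∈ ℝ^{n_x} and offsets h : {1,…,T} → ℝ^{n_x}, the function J_λ : (ℝ^{n_x})^T → ℝ given by J_λ(x_{1:T}) = Σ_{t=1}^{T} (y_t − C x_t − D u_t)ᵀ Σ_v⁻¹ (y_t − C x_t − D u_t) − 2 (H x₁ + h₁)ᵀ (E x₁ − E x̃₁) − Σ_{t=2}^{T} 2 (H x_t + h_t)ᵀ (E x_t − F x_{t−1} − K u_{t−1} − L w_{t−1}) is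 bounded above, i.e. sup over x_{1:T} ∈ (ℝ^{n_x})^T of J_λ(x_{1:T}) is finite. -/
open Matrix Finset

lemma quad_bound_above {V : Type*} [NormedAddCommGroup V] [NormedSpace ℝ V]
    [FiniteDimensional ℝ V]
    (c0 : ℝ) (l : V →ₗ[ℝ] ℝ) (Q : V → ℝ) (hQc : Continuous Q)
    (hQh : ∀ (s : ℝ) v, Q (s • v) = s^2 * Q v)
    (hQp : ∀ v : V, v ≠ 0 → 0 < Q v) :
    ∃ Cb : ℝ, ∀ v : V, c0 + l v - Q v ≤ Cb := by
  have hQ0 : Q 0 = 0 := by simpa using hQh 0 0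
  by_cases hV : ∃ v : V, v ≠ 0
  · obtain ⟨v0, hv0⟩ := hV
    have hKc : IsCompact (Metric.sphere (0:V) 1) := isCompact_sphere 0 1
    have hKne : (Metric.sphere (0:V) 1).Nonempty := by
      refine ⟨‖v0‖⁻¹ • v0, ?_⟩
      rw [mem_sphere_zero_iff_norm]
      rw [norm_smul, norm_inv, norm_norm]
      field_simp [norm_ne_zero_iff.mpr hv0]
    obtain ⟨um, humK, hum⟩ := hKc.exists_isMinOn hKne hQc.continuousOn
    have humn : ‖um‖ = 1 := mem_sphere_zero_iff_norm.mp humK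
    have hεpos : 0 < Q um := hQp um (by intro h0; rw [h0] at humn; simp at humn)
    set ε := Q um with hε
    let l' := LinearMap.toContinuousLinearMap l
    refine ⟨c0 + ‖l'‖^2/(4*ε), fun v => ?_⟩
    by_cases hv : v = 0
    · subst hv
      simp only [map_zero, hQ0, add_zero, sub_zero]
      have : 0 ≤ ‖l'‖^2/(4*ε) := by positivity
      linarith
    · have hvn : (0:ℝ) < ‖v‖ := norm_pos_iff.mpr hv
      have h1 : ε * ‖v‖^2 ≤ Q v := by
        have hqv : Q v = ‖v‖^2 * Q (‖v‖⁻¹ • v) := by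
          have : (‖v‖ : ℝ) • (‖v‖⁻¹ • v) = v := by
            rw [smul_smul, mul_inv_cancel₀ hvn.ne', one_smul]
          calc Q v = Q (‖v‖ • (‖v‖⁻¹ • v)) := by rw [this]
          _ = ‖v‖^2 * Q (‖v‖⁻¹ • v) := hQh _ _
        have hmem : ‖v‖⁻¹ • v ∈ Metric.sphere (0:V) 1 := by
          rw [mem_sphere_zero_iff_norm, norm_smul, norm_inv, norm_norm]
          field_simp
        have hle : Q um ≤ Q (‖v‖⁻¹ • v) := hum hmem
        rw [hqv]
        nlinarith [hle, sq_nonneg ‖v‖]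
      have h2 : l v ≤ ‖l'‖ * ‖v‖ := by
        calc l v ≤ |l v| := le_abs_self _
        _ = ‖l' v‖ := by rfl
        _ ≤ ‖l'‖ * ‖v‖ := l'.le_opNorm v
      have hl4 : 0 < 4 * ε := by linarith
      rw [div_eq_mul_inv]
      have h4 : (4*ε)⁻¹ * (4*ε) = 1 := inv_mul_cancel₀ hl4.ne'
      have h5 : (0:ℝ) ≤ (4*ε)⁻¹ := by positivity
      nlinarith [sq_nonneg (2*ε*‖v‖ - ‖l'‖), mul_le_mul_of_nonneg_left (sq_nonneg (2*ε*‖v‖ - ‖l'‖)) h5]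
  · push_neg at hV
    refine ⟨c0, fun v => ?_⟩
    rw [hV v]
    simp [hQ0]

section helpers
variable {m n : Type*} [Fintype m] [Fintype n]

lemma dot_transpose (A : Matrix m n ℝ) (x : n → ℝ) (y : m → ℝ) :
    x ⬝ᵥ (Aᵀ *ᵥ y) = (A *ᵥ x) ⬝ᵥ y := by
  rw [dotProduct_mulVec, vecMul_transpose]

lemma dot_symm (S : Matrix m m ℝ) (hS : Sᵀ = S) (a b : m → ℝ) :
    a ⬝ᵥ (S *ᵥ b) = b ⬝ᵥ (S *ᵥ a) := by
  conv_lhs => rw [← hS, dot_transpose, dotProduct_comm]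

end helpers

section key
variable {nx ny : ℕ}
variable (E F H P : Matrix (Fin nx) (Fin nx) ℝ)
variable (C : Matrix (Fin ny) (Fin nx) ℝ) (Sv : Matrix (Fin ny) (Fin ny) ℝ)

/-- the per-step nonnegative quantity coming from the LMI -/
noncomputable def keyExpr (a b : Fin nx → ℝ) : ℝ :=
  2*((H *ᵥ a) ⬝ᵥ (E *ᵥ a)) - a ⬝ᵥ (P *ᵥ a) - (C *ᵥ a) ⬝ᵥ (Sv⁻¹ *ᵥ (C *ᵥ a))
    - 2*((H *ᵥ b) ⬝ᵥ (F *ᵥ a)) + b ⬝ᵥ (P *ᵥ b)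

lemma key_quadform (hSv : Sv.PosDef) (a b : Fin nx → ℝ) :
    (Sum.elim (Sum.elim a (-b)) (-(Sv⁻¹ *ᵥ (C *ᵥ a)))) ⬝ᵥ
      ((Matrix.fromBlocks
        (Matrix.fromBlocks (Hᵀ * E + Eᵀ * H - P) (Fᵀ * H) (Hᵀ * F) P)
        (Matrix.fromRows Cᵀ 0)
        (Matrix.fromCols C 0)
        Sv) *ᵥ (Sum.elim (Sum.elim a (-b)) (-(Sv⁻¹ *ᵥ (C *ᵥ a)))))
    = keyExpr E F H P C Sv a b := by
  have hdet : IsUnit Sv.det := hSv.det_pos.ne'.isUnit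
  have hSvinv : Sv *ᵥ (Sv⁻¹ *ᵥ (C *ᵥ a)) = C *ᵥ a := by
    rw [mulVec_mulVec, mul_nonsing_inv _ hdet, one_mulVec]
  have hsymm : (Sv⁻¹)ᵀ = Sv⁻¹ := by
    have := hSv.isHermitian.inv
    simpa [Matrix.IsHermitian, Matrix.conjTranspose_eq_transpose_of_trivial] using this
  simp only [fromBlocks_mulVec, fromRows_mulVec, fromCols_mulVec_sumElim,
    sumElim_dotProduct_sumElim, Sum.elim_comp_inl, Sum.elim_comp_inr,
    dotProduct_add, add_mulVec, sub_mulVec,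
    ← mulVec_mulVec, zero_mulVec, mulVec_neg, mulVec_zero, dotProduct_neg,
    neg_dotProduct, dotProduct_zero, zero_dotProduct, hSvinv]
  simp only [dotProduct_sub, dotProduct_add]
  rw [dot_transpose H a (E *ᵥ a), dot_transpose E a (H *ᵥ a),
    dot_transpose F a (H *ᵥ b), dot_transpose H b (F *ᵥ a),
    dot_transpose C a (Sv⁻¹ *ᵥ (C *ᵥ a))]
  unfold keyExpr
  rw [dotProduct_comm (E *ᵥ a) (H *ᵥ a), dotProduct_comm (F *ᵥ a) (H *ᵥ b)]
  ring

end key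

section key2
variable {nx ny : ℕ}
variable {E F H P : Matrix (Fin nx) (Fin nx) ℝ}
variable {C : Matrix (Fin ny) (Fin nx) ℝ} {Sv : Matrix (Fin ny) (Fin ny) ℝ}

lemma keyExpr_nonneg (hSv : Sv.PosDef)
    (hM : (Matrix.fromBlocks
        (Matrix.fromBlocks (Hᵀ * E + Eᵀ * H - P) (Fᵀ * H) (Hᵀ * F) P)
        (Matrix.fromRows Cᵀ 0) (Matrix.fromCols C 0) Sv).PosDef)
    (a b : Fin nx → ℝ) : 0 ≤ keyExpr E F H P C Sv a b := by
  have := hM.posSemidef.dotProduct_mulVec_nonneg (Sum.elim (Sum.elim a (-b)) (-(Sv⁻¹ *ᵥ (C *ᵥ a))))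
  rwa [star_trivial, key_quadform E F H P C Sv hSv a b] at this

lemma keyExpr_pos (hSv : Sv.PosDef)
    (hM : (Matrix.fromBlocks
        (Matrix.fromBlocks (Hᵀ * E + Eᵀ * H - P) (Fᵀ * H) (Hᵀ * F) P)
        (Matrix.fromRows Cᵀ 0) (Matrix.fromCols C 0) Sv).PosDef)
    (a b : Fin nx → ℝ) (hab : a ≠ 0 ∨ b ≠ 0) : 0 < keyExpr E F H P C Sv a b := by
  have hz : (Sum.elim (Sum.elim a (-b)) (-(Sv⁻¹ *ᵥ (C *ᵥ a)))) ≠ 0 := by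
    intro h0
    have ha : a = 0 := by
      funext i
      exact congrFun h0 (Sum.inl (Sum.inl i))
    have hb : b = 0 := by
      funext i
      have := congrFun h0 (Sum.inl (Sum.inr i))
      simpa using this
    rcases hab with h | h <;> [exact h ha; exact h hb]
  have := hM.dotProduct_mulVec_pos hz
  rwa [star_trivial, key_quadform E F H P C Sv hSv a b] at this

end key2

lemma sum_Icc_split_top {T : ℕ} (f : ℕ → ℝ) (hT : 1 ≤ T) :
    ∑ t ∈ Icc 1 T, f t = (∑ t ∈ Icc 1 (T-1), f t) + f T := by
  obtain ⟨T', rfl⟩ : ∃ T', T = T' + 1 := ⟨T - 1, by omega⟩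
  simpa using Finset.sum_Icc_succ_top (by omega) f

lemma sum_Icc_reindex {T : ℕ} (g : ℕ → ℝ) :
    ∑ t ∈ Icc 2 T, g (t-1) = ∑ s ∈ Icc 1 (T-1), g s := by
  rcases Nat.eq_zero_or_pos T with rfl | hT
  · simp
  obtain ⟨T', rfl⟩ : ∃ T', T = T' + 1 := ⟨T - 1, by omega⟩
  rw [show (2:ℕ) = 1 + 1 from rfl, show T' + 1 = T' + 1 from rfl,
    ← Finset.map_add_right_Icc 1 T' 1, Finset.sum_map]
  simp [addRightEmbedding]


lemma sum_Icc_split1 {T : ℕ} (f : ℕ → ℝ) (hT : 1 ≤ T) :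
    ∑ t ∈ Icc 1 T, f t = f 1 + ∑ t ∈ Icc 2 T, f t := by
  have hins : Icc 1 T = insert 1 (Icc 2 T) := by
    ext z; simp only [Finset.mem_Icc, Finset.mem_insert]; omega
  rw [hins, Finset.sum_insert (by simp)]

section steps
variable {nx nu nw ny : ℕ}
variable (E F H : Matrix (Fin nx) (Fin nx) ℝ)
variable (C : Matrix (Fin ny) (Fin nx) ℝ) (S' : Matrix (Fin ny) (Fin ny) ℝ)

lemma step1_id (hs : S'ᵀ = S') (a xt h1 : Fin nx → ℝ) (e1 : Fin ny → ℝ) :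
    (e1 - C *ᵥ a) ⬝ᵥ (S' *ᵥ (e1 - C *ᵥ a)) - 2*((H *ᵥ a + h1) ⬝ᵥ (E *ᵥ a - E *ᵥ xt))
    = (e1 ⬝ᵥ (S' *ᵥ e1) + 2*(h1 ⬝ᵥ (E *ᵥ xt)))
      + ((-2)*((C *ᵥ a) ⬝ᵥ (S' *ᵥ e1)) + (2*((H *ᵥ a) ⬝ᵥ (E *ᵥ xt)) - 2*(h1 ⬝ᵥ (E *ᵥ a))))
      - (2*((H *ᵥ a) ⬝ᵥ (E *ᵥ a)) - (C *ᵥ a) ⬝ᵥ (S' *ᵥ (C *ᵥ a))) := by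
  simp only [mulVec_sub, dotProduct_sub, sub_dotProduct, dotProduct_add, add_dotProduct]
  rw [dot_symm S' hs e1 (C *ᵥ a)]
  ring

lemma step_id (hs : S'ᵀ = S') (xt xs ht d1 d2 : Fin nx → ℝ) (et : Fin ny → ℝ) :
    (et - C *ᵥ xt) ⬝ᵥ (S' *ᵥ (et - C *ᵥ xt))
      - 2*((H *ᵥ xt + ht) ⬝ᵥ (E *ᵥ xt - F *ᵥ xs - d1 - d2))
    = (et ⬝ᵥ (S' *ᵥ et) + 2*(ht ⬝ᵥ (d1 + d2)))
      + ((-2)*((C *ᵥ xt) ⬝ᵥ (S' *ᵥ et))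
        + (2*((H *ᵥ xt) ⬝ᵥ (d1 + d2)) - 2*(ht ⬝ᵥ (E *ᵥ xt)) + 2*(ht ⬝ᵥ (F *ᵥ xs))))
      - (2*((H *ᵥ xt) ⬝ᵥ (E *ᵥ xt)) - (C *ᵥ xt) ⬝ᵥ (S' *ᵥ (C *ᵥ xt))
        - 2*((H *ᵥ xt) ⬝ᵥ (F *ᵥ xs))) := by
  simp only [mulVec_sub, dotProduct_sub, sub_dotProduct, dotProduct_add, add_dotProduct]
  rw [dot_symm S' hs et (C *ᵥ xt)]
  ring
end steps

section main
variable {T nx nu nw ny : ℕ}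

/-- extract the `t`-th state from a finite state sequence -/
def Xv (T : ℕ) {nx : ℕ} (v : Fin T → Fin nx → ℝ) (t : ℕ) : Fin nx → ℝ :=
  if h : 1 ≤ t ∧ t ≤ T then v ⟨t - 1, by omega⟩ else 0

variable (T)
variable (E F H P : Matrix (Fin nx) (Fin nx) ℝ)
variable (K : Matrix (Fin nx) (Fin nu) ℝ) (L : Matrix (Fin nx) (Fin nw) ℝ)
variable (C : Matrix (Fin ny) (Fin nx) ℝ) (D : Matrix (Fin ny) (Fin nu) ℝ)
variable (Sv : Matrix (Fin ny) (Fin ny) ℝ)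
variable (u : ℕ → Fin nu → ℝ) (y : ℕ → Fin ny → ℝ) (w : ℕ → Fin nw → ℝ)
variable (x1tilde : Fin nx → ℝ) (h : ℕ → Fin nx → ℝ)

/-- the relaxed cost as a function of the (infinite) state sequence -/
noncomputable def BigExpr (x : ℕ → Fin nx → ℝ) : ℝ :=
  (∑ t ∈ Finset.Icc 1 T,
      (y t - C *ᵥ x t - D *ᵥ u t) ⬝ᵥ (Sv⁻¹ *ᵥ (y t - C *ᵥ x t - D *ᵥ u t)))
  - 2 * ((H *ᵥ x 1 + h 1) ⬝ᵥ (E *ᵥ x 1 - E *ᵥ x1tilde))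
  - ∑ t ∈ Finset.Icc 2 T,
      2 * ((H *ᵥ x t + h t) ⬝ᵥ
        (E *ᵥ x t - F *ᵥ x (t - 1) - K *ᵥ u (t - 1) - L *ᵥ w (t - 1)))

/-- the constant part -/
noncomputable def c0f : ℝ :=
  (∑ t ∈ Icc 1 T, (y t - D *ᵥ u t) ⬝ᵥ (Sv⁻¹ *ᵥ (y t - D *ᵥ u t)))
  + 2*(h 1 ⬝ᵥ (E *ᵥ x1tilde))
  + ∑ t ∈ Icc 2 T, 2*(h t ⬝ᵥ (K *ᵥ u (t-1) + L *ᵥ w (t-1)))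

/-- the linear part, as a function of a general state extraction -/
noncomputable def ellX (X : ℕ → Fin nx → ℝ) : ℝ :=
  (∑ t ∈ Icc 1 T, (-2)*((C *ᵥ X t) ⬝ᵥ (Sv⁻¹ *ᵥ (y t - D *ᵥ u t))))
  + (2*((H *ᵥ X 1) ⬝ᵥ (E *ᵥ x1tilde)) - 2*(h 1 ⬝ᵥ (E *ᵥ X 1)))
  + ∑ t ∈ Icc 2 T, (2*((H *ᵥ X t) ⬝ᵥ (K *ᵥ u (t-1) + L *ᵥ w (t-1)))
      - 2*(h t ⬝ᵥ (E *ᵥ X t)) + 2*(h t ⬝ᵥ (F *ᵥ X (t-1))))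

/-- the (negated) quadratic part -/
noncomputable def QX (X : ℕ → Fin nx → ℝ) : ℝ :=
  (∑ t ∈ Icc 1 T, (2*((H *ᵥ X t) ⬝ᵥ (E *ᵥ X t)) - (C *ᵥ X t) ⬝ᵥ (Sv⁻¹ *ᵥ (C *ᵥ X t))))
  - ∑ t ∈ Icc 2 T, 2*((H *ᵥ X t) ⬝ᵥ (F *ᵥ X (t-1)))

lemma expand_BigExpr (hSv : Sv.PosDef) (hT : 1 ≤ T) (X : ℕ → Fin nx → ℝ) :
    BigExpr T E F H K L C D Sv u y w x1tilde h X
    = c0f T E K L D Sv u y w x1tilde h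
      + ellX T E F H K L C D Sv u y w x1tilde h X
      - QX T E F H C Sv X := by
  have hdet : IsUnit Sv.det := hSv.det_pos.ne'.isUnit
  have hs : (Sv⁻¹)ᵀ = Sv⁻¹ := by
    have := hSv.isHermitian.inv
    simpa [Matrix.IsHermitian, Matrix.conjTranspose_eq_transpose_of_trivial] using this
  unfold BigExpr c0f ellX QX
  rw [sum_Icc_split1 _ hT, sum_Icc_split1 _ hT, sum_Icc_split1 _ hT, sum_Icc_split1 _ hT]
  have e1 : (y 1 - C *ᵥ X 1 - D *ᵥ u 1) ⬝ᵥ (Sv⁻¹ *ᵥ (y 1 - C *ᵥ X 1 - D *ᵥ u 1))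
      - 2 * ((H *ᵥ X 1 + h 1) ⬝ᵥ (E *ᵥ X 1 - E *ᵥ x1tilde))
      = ((y 1 - D *ᵥ u 1) ⬝ᵥ (Sv⁻¹ *ᵥ (y 1 - D *ᵥ u 1)) + 2*(h 1 ⬝ᵥ (E *ᵥ x1tilde)))
        + ((-2)*((C *ᵥ X 1) ⬝ᵥ (Sv⁻¹ *ᵥ (y 1 - D *ᵥ u 1)))
          + (2*((H *ᵥ X 1) ⬝ᵥ (E *ᵥ x1tilde)) - 2*(h 1 ⬝ᵥ (E *ᵥ X 1))))
        - (2*((H *ᵥ X 1) ⬝ᵥ (E *ᵥ X 1)) - (C *ᵥ X 1) ⬝ᵥ (Sv⁻¹ *ᵥ (C *ᵥ X 1))) := by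
    rw [show y 1 - C *ᵥ X 1 - D *ᵥ u 1 = (y 1 - D *ᵥ u 1) - C *ᵥ X 1 from sub_right_comm _ _ _]
    exact step1_id E H C Sv⁻¹ hs (X 1) x1tilde (h 1) (y 1 - D *ᵥ u 1)
  have e2 : ∀ t ∈ Icc 2 T,
      (y t - C *ᵥ X t - D *ᵥ u t) ⬝ᵥ (Sv⁻¹ *ᵥ (y t - C *ᵥ X t - D *ᵥ u t))
        - 2 * ((H *ᵥ X t + h t) ⬝ᵥ
            (E *ᵥ X t - F *ᵥ X (t-1) - K *ᵥ u (t-1) - L *ᵥ w (t-1)))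
      = ((y t - D *ᵥ u t) ⬝ᵥ (Sv⁻¹ *ᵥ (y t - D *ᵥ u t))
            + 2*(h t ⬝ᵥ (K *ᵥ u (t-1) + L *ᵥ w (t-1))))
        + ((-2)*((C *ᵥ X t) ⬝ᵥ (Sv⁻¹ *ᵥ (y t - D *ᵥ u t)))
          + (2*((H *ᵥ X t) ⬝ᵥ (K *ᵥ u (t-1) + L *ᵥ w (t-1)))
            - 2*(h t ⬝ᵥ (E *ᵥ X t)) + 2*(h t ⬝ᵥ (F *ᵥ X (t-1)))))
        - (2*((H *ᵥ X t) ⬝ᵥ (E *ᵥ X t)) - (C *ᵥ X t) ⬝ᵥ (Sv⁻¹ *ᵥ (C *ᵥ X t))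
            - 2*((H *ᵥ X t) ⬝ᵥ (F *ᵥ X (t-1)))) := by
    intro t _
    rw [show y t - C *ᵥ X t - D *ᵥ u t = (y t - D *ᵥ u t) - C *ᵥ X t from sub_right_comm _ _ _]
    exact step_id E F H C Sv⁻¹ hs (X t) (X (t-1)) (h t) (K *ᵥ u (t-1)) (L *ᵥ w (t-1))
      (y t - D *ᵥ u t)
  have hsum : ∑ t ∈ Icc 2 T,
        ((y t - C *ᵥ X t - D *ᵥ u t) ⬝ᵥ (Sv⁻¹ *ᵥ (y t - C *ᵥ X t - D *ᵥ u t))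
          - 2 * ((H *ᵥ X t + h t) ⬝ᵥ
              (E *ᵥ X t - F *ᵥ X (t-1) - K *ᵥ u (t-1) - L *ᵥ w (t-1))))
      = ∑ t ∈ Icc 2 T,
        (((y t - D *ᵥ u t) ⬝ᵥ (Sv⁻¹ *ᵥ (y t - D *ᵥ u t))
            + 2*(h t ⬝ᵥ (K *ᵥ u (t-1) + L *ᵥ w (t-1))))
        + ((-2)*((C *ᵥ X t) ⬝ᵥ (Sv⁻¹ *ᵥ (y t - D *ᵥ u t)))
          + (2*((H *ᵥ X t) ⬝ᵥ (K *ᵥ u (t-1) + L *ᵥ w (t-1)))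
            - 2*(h t ⬝ᵥ (E *ᵥ X t)) + 2*(h t ⬝ᵥ (F *ᵥ X (t-1)))))
        - (2*((H *ᵥ X t) ⬝ᵥ (E *ᵥ X t)) - (C *ᵥ X t) ⬝ᵥ (Sv⁻¹ *ᵥ (C *ᵥ X t))
            - 2*((H *ᵥ X t) ⬝ᵥ (F *ᵥ X (t-1))))) :=
    Finset.sum_congr rfl e2
  simp only [Finset.sum_sub_distrib, Finset.sum_add_distrib] at hsum ⊢
  linarith [e1, hsum]

end main

section qpos
variable {T nx ny : ℕ}

lemma QX_decomp (hT : 1 ≤ T)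
    (E F H P : Matrix (Fin nx) (Fin nx) ℝ)
    (C : Matrix (Fin ny) (Fin nx) ℝ) (Sv : Matrix (Fin ny) (Fin ny) ℝ)
    (X : ℕ → Fin nx → ℝ) :
    QX T E F H C Sv X
    = X 1 ⬝ᵥ (P *ᵥ X 1)
      + (∑ t ∈ Icc 2 T, keyExpr E F H P C Sv (X (t-1)) (X t))
      + keyExpr E F H P C Sv (X T) 0 := by
  unfold QX keyExpr
  simp only [mulVec_zero, zero_dotProduct, dotProduct_zero, mul_zero, sub_zero, add_zero]
  simp only [Finset.sum_sub_distrib, Finset.sum_add_distrib]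
  rw [sum_Icc_reindex (fun s => 2*((H *ᵥ X s) ⬝ᵥ (E *ᵥ X s))),
      sum_Icc_reindex (fun s => X s ⬝ᵥ (P *ᵥ X s)),
      sum_Icc_reindex (fun s => (C *ᵥ X s) ⬝ᵥ (Sv⁻¹ *ᵥ (C *ᵥ X s)))]
  have hs1 := sum_Icc_split_top (fun t => 2*((H *ᵥ X t) ⬝ᵥ (E *ᵥ X t))) hT
  have hs2 := sum_Icc_split_top (fun t => (C *ᵥ X t) ⬝ᵥ (Sv⁻¹ *ᵥ (C *ᵥ X t))) hT
  have hb := sum_Icc_split1 (fun t => X t ⬝ᵥ (P *ᵥ X t)) hT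
  have ht := sum_Icc_split_top (fun t => X t ⬝ᵥ (P *ᵥ X t)) hT
  linarith [hs1, hs2, hb, ht]

lemma Xv_index (v : Fin T → Fin nx → ℝ) (i : Fin T) : Xv T v (i.1 + 1) = v i := by
  unfold Xv
  rw [dif_pos ⟨by omega, by omega⟩]
  exact congrArg v (Fin.ext (by simp))

lemma QX_pos {E F H P : Matrix (Fin nx) (Fin nx) ℝ}
    {C : Matrix (Fin ny) (Fin nx) ℝ} {Sv : Matrix (Fin ny) (Fin ny) ℝ}
    (hP : P.PosDef) (hSv : Sv.PosDef)
    (hM : (Matrix.fromBlocks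
        (Matrix.fromBlocks (Hᵀ * E + Eᵀ * H - P) (Fᵀ * H) (Hᵀ * F) P)
        (Matrix.fromRows Cᵀ 0) (Matrix.fromCols C 0) Sv).PosDef)
    (hT : 1 ≤ T) (v : Fin T → Fin nx → ℝ) (hv : v ≠ 0) :
    0 < QX T E F H C Sv (Xv T v) := by
  rw [QX_decomp hT E F H P C Sv (Xv T v)]
  set X := Xv T v with hX
  have h1 : 0 ≤ X 1 ⬝ᵥ (P *ᵥ X 1) := by
    have := hP.posSemidef.dotProduct_mulVec_nonneg (X 1); rwa [star_trivial] at this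
  have hnn : ∀ t ∈ Icc 2 T, 0 ≤ keyExpr E F H P C Sv (X (t-1)) (X t) :=
    fun t _ => keyExpr_nonneg hSv hM _ _
  have h2 : 0 ≤ ∑ t ∈ Icc 2 T, keyExpr E F H P C Sv (X (t-1)) (X t) :=
    Finset.sum_nonneg hnn
  have h3 : 0 ≤ keyExpr E F H P C Sv (X T) 0 := keyExpr_nonneg hSv hM _ _
  obtain ⟨i, hi⟩ := Function.ne_iff.mp hv
  have hXi : X (i.1 + 1) = v i := Xv_index v i
  by_cases hi0 : i.1 = 0
  · have hX1 : X 1 ≠ 0 := by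
      rw [show (1:ℕ) = i.1 + 1 by omega, hXi]
      simpa using hi
    have h1' : 0 < X 1 ⬝ᵥ (P *ᵥ X 1) := by
      have := hP.dotProduct_mulVec_pos hX1; rwa [star_trivial] at this
    linarith
  · have hs2 : 2 ≤ i.1 + 1 := by omega
    have hsT : i.1 + 1 ≤ T := by omega
    have hkey : 0 < keyExpr E F H P C Sv (X (i.1 + 1 - 1)) (X (i.1 + 1)) := by
      refine keyExpr_pos hSv hM _ _ (Or.inr ?_)
      rw [hXi]; simpa using hi
    have hle := Finset.single_le_sum hnn (Finset.mem_Icc.mpr ⟨hs2, hsT⟩)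
    linarith
end qpos

section lincont
variable {T nx nu nw ny : ℕ}
variable (E F H P : Matrix (Fin nx) (Fin nx) ℝ)
variable (K : Matrix (Fin nx) (Fin nu) ℝ) (L : Matrix (Fin nx) (Fin nw) ℝ)
variable (C : Matrix (Fin ny) (Fin nx) ℝ) (D : Matrix (Fin ny) (Fin nu) ℝ)
variable (Sv : Matrix (Fin ny) (Fin ny) ℝ)
variable (u : ℕ → Fin nu → ℝ) (y : ℕ → Fin ny → ℝ) (w : ℕ → Fin nw → ℝ)
variable (x1tilde : Fin nx → ℝ) (h : ℕ → Fin nx → ℝ)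

lemma Xv_add (v v' : Fin T → Fin nx → ℝ) (t : ℕ) :
    Xv T (v + v') t = Xv T v t + Xv T v' t := by
  unfold Xv; split_ifs with hh
  · rfl
  · simp

lemma Xv_smul (s : ℝ) (v : Fin T → Fin nx → ℝ) (t : ℕ) :
    Xv T (s • v) t = s • Xv T v t := by
  unfold Xv; split_ifs with hh
  · rfl
  · simp

lemma ell_isLinear :
    IsLinearMap ℝ (fun v : Fin T → Fin nx → ℝ =>
      ellX T E F H K L C D Sv u y w x1tilde h (Xv T v)) := by
  constructor
  · intro v v'
    unfold ellX
    simp only [Xv_add, mulVec_add, dotProduct_add, add_dotProduct, mul_add,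
      sub_eq_add_neg, neg_add, Finset.sum_add_distrib]
    ring
  · intro s v
    unfold ellX
    simp only [Xv_smul, mulVec_smul, smul_dotProduct, dotProduct_smul, smul_eq_mul]
    rw [mul_add, mul_add, Finset.mul_sum, Finset.mul_sum]
    congr 1
    · congr 1
      · exact Finset.sum_congr rfl (fun t _ => by ring)
      · ring
    · exact Finset.sum_congr rfl (fun t _ => by ring)

lemma Q_homog (s : ℝ) (v : Fin T → Fin nx → ℝ) :
    QX T E F H C Sv (Xv T (s • v)) = s^2 * QX T E F H C Sv (Xv T v) := by
  unfold QX
  simp only [Xv_smul, mulVec_smul, smul_dotProduct, dotProduct_smul, smul_eq_mul]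
  rw [mul_sub, Finset.mul_sum, Finset.mul_sum]
  congr 1
  · exact Finset.sum_congr rfl (fun t _ => by ring)
  · exact Finset.sum_congr rfl (fun t _ => by ring)

lemma continuous_Xv (t : ℕ) :
    Continuous (fun v : Fin T → Fin nx → ℝ => Xv T v t) := by
  unfold Xv
  by_cases hh : 1 ≤ t ∧ t ≤ T
  · simp only [dif_pos hh]; exact continuous_apply _
  · simp only [dif_neg hh]; exact continuous_const

lemma continuous_dot {V : Type*} [TopologicalSpace V] {ι : Type*} [Fintype ι]
    {f g : V → ι → ℝ} (hf : Continuous f) (hg : Continuous g) :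
    Continuous fun v => f v ⬝ᵥ g v := by
  simp only [dotProduct]
  exact continuous_finset_sum _ fun i _ =>
    ((continuous_apply i).comp hf).mul ((continuous_apply i).comp hg)

lemma continuous_mulVecc {V : Type*} [TopologicalSpace V] {ι κ : Type*} [Fintype ι] [Fintype κ]
    (A : Matrix ι κ ℝ) {f : V → κ → ℝ} (hf : Continuous f) :
    Continuous fun v => A *ᵥ f v := by
  refine continuous_pi fun i => ?_
  simp only [mulVec, dotProduct]
  exact continuous_finset_sum _ fun j _ => continuous_const.mul ((continuous_apply j).comp hf)

lemma Q_cont : Continuous (fun v : Fin T → Fin nx → ℝ => QX T E F H C Sv (Xv T v)) := by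
  unfold QX
  apply Continuous.sub
  · apply continuous_finset_sum
    intro t _
    exact (continuous_const.mul (continuous_dot (continuous_mulVecc H (continuous_Xv t))
        (continuous_mulVecc E (continuous_Xv t)))).sub
      (continuous_dot (continuous_mulVecc C (continuous_Xv t))
        (continuous_mulVecc Sv⁻¹ (continuous_mulVecc C (continuous_Xv t))))
  · apply continuous_finset_sum
    intro t _
    exact continuous_const.mul (continuous_dot (continuous_mulVecc H (continuous_Xv t))
      (continuous_mulVecc F (continuous_Xv (t-1))))

lemma BigExpr_congr (hT : 1 ≤ T) (x x' : ℕ → Fin nx → ℝ)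
    (hx : ∀ t, 1 ≤ t → t ≤ T → x t = x' t) :
    BigExpr T E F H K L C D Sv u y w x1tilde h x
      = BigExpr T E F H K L C D Sv u y w x1tilde h x' := by
  unfold BigExpr
  have h1 : (∑ t ∈ Finset.Icc 1 T,
      (y t - C *ᵥ x t - D *ᵥ u t) ⬝ᵥ (Sv⁻¹ *ᵥ (y t - C *ᵥ x t - D *ᵥ u t)))
      = ∑ t ∈ Finset.Icc 1 T,
      (y t - C *ᵥ x' t - D *ᵥ u t) ⬝ᵥ (Sv⁻¹ *ᵥ (y t - C *ᵥ x' t - D *ᵥ u t)) := by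
    refine Finset.sum_congr rfl fun t ht => ?_
    rw [Finset.mem_Icc] at ht
    rw [hx t ht.1 ht.2]
  have h2 : (∑ t ∈ Finset.Icc 2 T,
      2 * ((H *ᵥ x t + h t) ⬝ᵥ
        (E *ᵥ x t - F *ᵥ x (t - 1) - K *ᵥ u (t - 1) - L *ᵥ w (t - 1))))
      = ∑ t ∈ Finset.Icc 2 T,
      2 * ((H *ᵥ x' t + h t) ⬝ᵥ
        (E *ᵥ x' t - F *ᵥ x' (t - 1) - K *ᵥ u (t - 1) - L *ᵥ w (t - 1))) := by
    refine Finset.sum_congr rfl fun t ht => ?_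
    rw [Finset.mem_Icc] at ht
    rw [hx t (by omega) ht.2, hx (t-1) (by omega) (by omega)]
  rw [h1, h2, hx 1 le_rfl hT]
end lincont

/-- Finiteness of the Lagrangian relaxation of simulation error: if the stability LMI
`M = [[HᵀE + EᵀH − P, FᵀH, Cᵀ], [HᵀF, P, 0], [C, 0, Σ_v]] > 0` holds, then for
arbitrary inputs `u`, outputs `y`, disturbances `w`, initial state `x̃₁` and multiplier
offsets `h`, the relaxed cost
`J_λ(x_{1:T}) = Σ_{t=1}^T |y_t − Cx_t − Du_t|²_{Σ_v⁻¹}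
  − 2(Hx₁ + h₁)ᵀ(Ex₁ − Ex̃₁)
  − Σ_{t=2}^T 2(Hx_t + h_t)ᵀ(Ex_t − Fx_{t−1} − Ku_{t−1} − Lw_{t−1})`
is bounded above over all state sequences `x_{1:T}`. -/
theorem lagrangian_relaxation_bounded_above
    {T nx nu nw ny : ℕ} (hT : 1 ≤ T) (hnx : 1 ≤ nx) (hnu : 1 ≤ nu)
    (hnw : 1 ≤ nw) (hny : 1 ≤ ny)
    (E F H P : Matrix (Fin nx) (Fin nx) ℝ) (hP : P.PosDef)
    (K : Matrix (Fin nx) (Fin nu) ℝ) (L : Matrix (Fin nx) (Fin nw) ℝ)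
    (C : Matrix (Fin ny) (Fin nx) ℝ) (D : Matrix (Fin ny) (Fin nu) ℝ)
    (Sv : Matrix (Fin ny) (Fin ny) ℝ) (hSv : Sv.PosDef)
    (hM : (Matrix.fromBlocks
        (Matrix.fromBlocks (Hᵀ * E + Eᵀ * H - P) (Fᵀ * H) (Hᵀ * F) P)
        (Matrix.fromRows Cᵀ 0)
        (Matrix.fromCols C 0)
        Sv).PosDef)
    (u : ℕ → (Fin nu → ℝ)) (y : ℕ → (Fin ny → ℝ)) (w : ℕ → (Fin nw → ℝ))
    (x1tilde : Fin nx → ℝ) (h : ℕ → (Fin nx → ℝ)) :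
    BddAbove (Set.range (fun x : ℕ → (Fin nx → ℝ) =>
      (∑ t ∈ Finset.Icc 1 T,
        (y t - C *ᵥ x t - D *ᵥ u t) ⬝ᵥ (Sv⁻¹ *ᵥ (y t - C *ᵥ x t - D *ᵥ u t)))
      - 2 * ((H *ᵥ x 1 + h 1) ⬝ᵥ (E *ᵥ x 1 - E *ᵥ x1tilde))
      - ∑ t ∈ Finset.Icc 2 T,
          2 * ((H *ᵥ x t + h t) ⬝ᵥ
            (E *ᵥ x t - F *ᵥ x (t - 1) - K *ᵥ u (t - 1) - L *ᵥ w (t - 1))))) := by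
  obtain ⟨Cb, hCb⟩ := quad_bound_above (c0f T E K L D Sv u y w x1tilde h)
    (IsLinearMap.mk' _ (ell_isLinear E F H K L C D Sv u y w x1tilde h))
    (fun v : Fin T → Fin nx → ℝ => QX T E F H C Sv (Xv T v))
    (Q_cont E F H C Sv)
    (fun s v => by simpa using Q_homog E F H C Sv s v)
    (fun v hv => QX_pos hP hSv hM hT v hv)
  refine ⟨Cb, ?_⟩
  rintro z ⟨x, rfl⟩
  show BigExpr T E F H K L C D Sv u y w x1tilde h x ≤ Cb
  have hx : ∀ t, 1 ≤ t → t ≤ T → x t = Xv T (fun i : Fin T => x (i.1 + 1)) t := by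
    intro t h1 h2
    unfold Xv
    rw [dif_pos ⟨h1, h2⟩]
    exact congrArg x (show t = t - 1 + 1 by omega)
  calc BigExpr T E F H K L C D Sv u y w x1tilde h x
      = BigExpr T E F H K L C D Sv u y w x1tilde h
          (Xv T (fun i : Fin T => x (i.1 + 1))) :=
        BigExpr_congr E F H K L C D Sv u y w x1tilde h hT _ _ hx
    _ = c0f T E K L D Sv u y w x1tilde h
        + ellX T E F H K L C D Sv u y w x1tilde h (Xv T (fun i : Fin T => x (i.1 + 1)))
        - QX T E F H C Sv (Xv T (fun i : Fin T => x (i.1 + 1))) :=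
        expand_BigExpr T E F H K L C D Sv u y w x1tilde h hSv hT _
    _ ≤ Cb := by simpa using hCb (fun i : Fin T => x (i.1 + 1))
end

section
/- Let N, M ≥ 1. Let F̄ be an invertible real N×N matrix, C̄ a real M×N matrix, S a real symmetric positive definite M×M matrix, Λ a real N×N matrix, ε ∈ ℝ^N and b ∈ ℝ^M. Define Ψ = C̄ᵀ S⁻¹ C̄ − Λᵀ F̄ − F̄ᵀ Λ and assume Ψ is negative definite. Let X* = −F̄⁻¹ ε (the unique solution of F̄ X + ε = 0), and set h = (F̄ᵀ)⁻¹ (Ψ X* − C̄ᵀ S⁻¹ b − Λᵀ ε). Then the concave quadratic function J_λ(X) = (b − C̄ X)ᵀ S⁻¹ (b − C̄ X) − 2 (Λ X + h)ᵀ (F̄ X + ε) attains its supremum over X ∈ ℝ^N at X = X*, and sup_{X ∈ ℝ^N} J_λ(X) = (b − C̄ X*)ᵀ S⁻¹ (b − C̄ X*). In other words, with this choice of multiplier offset h, the Lagrangian relaxation is tight: its value equals the simulation error of the current model. -/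
open Matrix

/-- Tightness of the Lagrangian relaxation with the multiplier offset
`h = (F̄ᵀ)⁻¹(Ψ X* − C̄ᵀS⁻¹b − Λᵀε)`: the concave quadratic
`J_λ(X) = (b − C̄X)ᵀS⁻¹(b − C̄X) − 2(ΛX + h)ᵀ(F̄X + ε)` attains its supremum at
`X* = −F̄⁻¹ε` (the unique solution of `F̄X + ε = 0`), where its value is the
simulation error `(b − C̄X*)ᵀS⁻¹(b − C̄X*)`. -/
theorem lagrangian_relaxation_tightness
    {N M : ℕ} (hN : 1 ≤ N) (hM : 1 ≤ M)
    (Fbar : Matrix (Fin N) (Fin N) ℝ) (hFbar : IsUnit Fbar)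
    (Cbar : Matrix (Fin M) (Fin N) ℝ)
    (S : Matrix (Fin M) (Fin M) ℝ) (hS : S.PosDef)
    (Lam : Matrix (Fin N) (Fin N) ℝ) (ε : Fin N → ℝ) (b : Fin M → ℝ)
    (Psi : Matrix (Fin N) (Fin N) ℝ)
    (hPsi : Psi = Cbarᵀ * S⁻¹ * Cbar - Lamᵀ * Fbar - Fbarᵀ * Lam)
    (hPsiNegDef : (-Psi).PosDef)
    (Xstar : Fin N → ℝ) (hXstar : Xstar = -(Fbar⁻¹ *ᵥ ε))
    (h : Fin N → ℝ)
    (hh : h = (Fbarᵀ)⁻¹ *ᵥ (Psi *ᵥ Xstar - Cbarᵀ *ᵥ (S⁻¹ *ᵥ b) - Lamᵀ *ᵥ ε)) :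
    (∀ X : Fin N → ℝ,
      (b - Cbar *ᵥ X) ⬝ᵥ (S⁻¹ *ᵥ (b - Cbar *ᵥ X))
          - 2 * ((Lam *ᵥ X + h) ⬝ᵥ (Fbar *ᵥ X + ε)) ≤
        (b - Cbar *ᵥ Xstar) ⬝ᵥ (S⁻¹ *ᵥ (b - Cbar *ᵥ Xstar))
          - 2 * ((Lam *ᵥ Xstar + h) ⬝ᵥ (Fbar *ᵥ Xstar + ε))) ∧
    ((b - Cbar *ᵥ Xstar) ⬝ᵥ (S⁻¹ *ᵥ (b - Cbar *ᵥ Xstar))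
          - 2 * ((Lam *ᵥ Xstar + h) ⬝ᵥ (Fbar *ᵥ Xstar + ε)) =
        (b - Cbar *ᵥ Xstar) ⬝ᵥ (S⁻¹ *ᵥ (b - Cbar *ᵥ Xstar))) := by
  have hdet : IsUnit Fbar.det := (Matrix.isUnit_iff_isUnit_det Fbar).mp hFbar
  have hdetT : IsUnit Fbarᵀ.det := by rwa [Matrix.det_transpose]
  -- F̄ X* = -ε
  have hA : Fbar *ᵥ Xstar = -ε := by
    rw [hXstar, Matrix.mulVec_neg, Matrix.mulVec_mulVec, Matrix.mul_nonsing_inv _ hdet,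
      Matrix.one_mulVec]
  have hA0 : Fbar *ᵥ Xstar + ε = 0 := by rw [hA]; simp
  -- F̄ᵀ h = Ψ X* - C̄ᵀ S⁻¹ b - Λᵀ ε
  have hB : Fbarᵀ *ᵥ h = Psi *ᵥ Xstar - Cbarᵀ *ᵥ (S⁻¹ *ᵥ b) - Lamᵀ *ᵥ ε := by
    rw [hh, Matrix.mulVec_mulVec, Matrix.mul_nonsing_inv _ hdetT, Matrix.one_mulVec]
  have hε : ε = -(Fbar *ᵥ Xstar) := by rw [hA]; simp
  -- key : F̄ᵀ (Λ X* + h) = -(C̄ᵀ S⁻¹ (b - C̄ X*))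
  have key : Fbarᵀ *ᵥ (Lam *ᵥ Xstar + h)
      = -(Cbarᵀ *ᵥ (S⁻¹ *ᵥ (b - Cbar *ᵥ Xstar))) := by
    rw [Matrix.mulVec_add, hB, hPsi, hε]
    simp only [Matrix.sub_mulVec, Matrix.mulVec_neg, ← Matrix.mulVec_mulVec,
      Matrix.mulVec_sub, Matrix.mulVec_neg]
    abel
  -- symmetry of S⁻¹
  have hSsymm : S⁻¹ᵀ = S⁻¹ := by
    rw [Matrix.transpose_nonsing_inv]
    congr 1
    exact hS.isHermitian.eq
  have hSinvDot : ∀ u v : Fin M → ℝ, u ⬝ᵥ (S⁻¹ *ᵥ v) = v ⬝ᵥ (S⁻¹ *ᵥ u) := by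
    intro u v
    rw [Matrix.dotProduct_mulVec, ← Matrix.mulVec_transpose, hSsymm, dotProduct_comm]
  -- generic transpose-dot fact
  have hTdot : ∀ {P Q : ℕ} (A : Matrix (Fin P) (Fin Q) ℝ) (u : Fin P → ℝ) (v : Fin Q → ℝ),
      (Aᵀ *ᵥ u) ⬝ᵥ v = u ⬝ᵥ (A *ᵥ v) := by
    intro P Q A u v
    rw [Matrix.mulVec_transpose, ← Matrix.dotProduct_mulVec]
  constructor
  · intro X
    set d : Fin N → ℝ := X - Xstar with hd
    set u : Fin M → ℝ := b - Cbar *ᵥ Xstar with hu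
    have hbX : b - Cbar *ᵥ X = u - Cbar *ᵥ d := by
      rw [hu, hd, Matrix.mulVec_sub]; abel
    have hFX : Fbar *ᵥ X + ε = Fbar *ᵥ d := by
      rw [hd, Matrix.mulVec_sub, hA]; abel
    have hLX : Lam *ᵥ X = Lam *ᵥ Xstar + Lam *ᵥ d := by
      rw [hd, Matrix.mulVec_sub]; abel
    -- cross term
    have hcross : (Lam *ᵥ Xstar + h) ⬝ᵥ (Fbar *ᵥ d)
        = -((Cbar *ᵥ d) ⬝ᵥ (S⁻¹ *ᵥ u)) := by
      rw [← hTdot Fbar (Lam *ᵥ Xstar + h) d, key, neg_dotProduct,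
        hTdot Cbar (S⁻¹ *ᵥ u) d, dotProduct_comm, hSinvDot]
    -- quadratic term
    have hquad : d ⬝ᵥ (Psi *ᵥ d)
        = (Cbar *ᵥ d) ⬝ᵥ (S⁻¹ *ᵥ (Cbar *ᵥ d)) - 2 * ((Lam *ᵥ d) ⬝ᵥ (Fbar *ᵥ d)) := by
      rw [hPsi]
      simp only [Matrix.sub_mulVec, ← Matrix.mulVec_mulVec, dotProduct_sub]
      rw [show Cbarᵀ *ᵥ S⁻¹ *ᵥ Cbar *ᵥ d = Cbarᵀ *ᵥ (S⁻¹ *ᵥ (Cbar *ᵥ d)) by rfl]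
      rw [dotProduct_comm d (Cbarᵀ *ᵥ _), hTdot Cbar,
        dotProduct_comm d (Lamᵀ *ᵥ _), hTdot Lam,
        dotProduct_comm d (Fbarᵀ *ᵥ _), hTdot Fbar,
        dotProduct_comm (Fbar *ᵥ d) (Lam *ᵥ d),
        dotProduct_comm (S⁻¹ *ᵥ (Cbar *ᵥ d)) (Cbar *ᵥ d)]
      ring
    have hneg : d ⬝ᵥ (Psi *ᵥ d) ≤ 0 := by
      have := hPsiNegDef.posSemidef.dotProduct_mulVec_nonneg d
      simp only [Matrix.neg_mulVec, dotProduct_neg, star_trivial] at this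
      linarith
    rw [hbX, hFX, hLX, hA0]
    have expand : (u - Cbar *ᵥ d) ⬝ᵥ (S⁻¹ *ᵥ (u - Cbar *ᵥ d))
        - 2 * ((Lam *ᵥ Xstar + Lam *ᵥ d + h) ⬝ᵥ (Fbar *ᵥ d))
        = u ⬝ᵥ (S⁻¹ *ᵥ u) - 2 * ((Lam *ᵥ Xstar + h) ⬝ᵥ (0 : Fin N → ℝ))
          + d ⬝ᵥ (Psi *ᵥ d) := by
      rw [hquad, dotProduct_zero]
      simp only [Matrix.mulVec_sub, sub_dotProduct, dotProduct_sub,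
        add_dotProduct]
      have e1 : u ⬝ᵥ (S⁻¹ *ᵥ (Cbar *ᵥ d)) = (Cbar *ᵥ d) ⬝ᵥ (S⁻¹ *ᵥ u) := hSinvDot _ _
      have e2 : (Lam *ᵥ Xstar) ⬝ᵥ (Fbar *ᵥ d) + h ⬝ᵥ (Fbar *ᵥ d)
          = -((Cbar *ᵥ d) ⬝ᵥ (S⁻¹ *ᵥ u)) := by
        rw [← add_dotProduct]; exact hcross
      linarith [e1, e2]
    rw [expand]
    linarith
  · rw [hA0, dotProduct_zero]
    ring
end

section
/- Let n, m ≥ 1, let E, F, H, P be real n×n matrices with P symmetric, let C be a real m×n matrix and Σ_v a real symmetric m×m matrix. Suppose the block matrix M = [[HᵀE + EᵀH − P, FᵀH, Cᵀ], [HᵀF, P, 0], [C, 0, Σ_v]] is positive definite. Then E is invertible and the matrix A = E⁻¹ F is Schur stable: every eigenvalue λ ∈ ℂ of A (i.e. every element of the spectrum of A regarded as a complex matrix) satisfies |λ| < 1. (This is the 'only if' direction of the statement that the set Θ(H) = {η : M(η, H) > 0} parametrizes stable linear models.) -/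
open Matrix

open scoped ComplexOrder

section Helpers

variable {k l : Type*} [Fintype k] [Fintype l]

/-- The top-left block of a positive definite block matrix is positive definite. -/
lemma posDef_toBlocks₁₁ {R : Type*} [CommRing R] [PartialOrder R] [StarRing R]
    {A : Matrix k k R} {B : Matrix k l R} {C : Matrix l k R} {D : Matrix l l R}
    (h : (fromBlocks A B C D).PosDef) : A.PosDef := by
  refine PosDef.of_dotProduct_mulVec_pos (isHermitian_fromBlocks_iff.mp h.1).1 fun x hx => ?_
  have hx' : (Sum.elim x (0 : l → R)) ≠ 0 := by
    intro hc
    exact hx (funext fun i => congrFun hc (Sum.inl i))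
  have := h.dotProduct_mulVec_pos hx'
  simpa [Function.star_sumElim, fromBlocks_mulVec, sumElim_dotProduct_sumElim] using this

/-- The bottom-right block of a positive definite block matrix is positive definite. -/
lemma posDef_toBlocks₂₂ {R : Type*} [CommRing R] [PartialOrder R] [StarRing R]
    {A : Matrix k k R} {B : Matrix k l R} {C : Matrix l k R} {D : Matrix l l R}
    (h : (fromBlocks A B C D).PosDef) : D.PosDef := by
  refine PosDef.of_dotProduct_mulVec_pos (isHermitian_fromBlocks_iff.mp h.1).2.2.2 fun x hx => ?_
  have hx' : (Sum.elim (0 : k → R) x) ≠ 0 := by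
    intro hc
    exact hx (funext fun i => congrFun hc (Sum.inr i))
  have := h.dotProduct_mulVec_pos hx'
  simpa [Function.star_sumElim, fromBlocks_mulVec, sumElim_dotProduct_sumElim] using this

lemma mulVec_map_ofReal (M : Matrix k k ℝ) (v : k → ℝ) :
    (M.map Complex.ofReal) *ᵥ (fun i => (v i : ℂ)) = fun i => (((M *ᵥ v) i : ℝ) : ℂ) := by
  funext i
  simp [mulVec, dotProduct, Matrix.map_apply]

lemma dotProduct_map_ofReal (a b : k → ℝ) :
    (fun i => ((a i : ℝ) : ℂ)) ⬝ᵥ (fun i => ((b i : ℝ) : ℂ)) = ((a ⬝ᵥ b : ℝ) : ℂ) := by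
  simp [dotProduct]

lemma map_ofReal_mulVec_star (M : Matrix k k ℝ) (v : k → ℂ) :
    (M.map Complex.ofReal) *ᵥ (star v) = star ((M.map Complex.ofReal) *ᵥ v) := by
  funext i
  simp only [Pi.star_apply, mulVec, dotProduct, Matrix.map_apply]
  rw [star_sum]
  congr 1
  funext j
  simp [Complex.star_def, star_mul', Complex.conj_ofReal, mul_comm]

lemma map_ofReal_mul {k2 l2 o2 : Type*} [Fintype l2] (A : Matrix k2 l2 ℝ) (B : Matrix l2 o2 ℝ) :
    (A * B).map Complex.ofReal = A.map Complex.ofReal * B.map Complex.ofReal :=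
  Matrix.map_mul (f := Complex.ofRealHom)

lemma dot_transpose_s14 {R : Type*} [CommRing R] (M : Matrix k k R) (u v : k → R) :
    u ⬝ᵥ (Mᵀ *ᵥ v) = v ⬝ᵥ (M *ᵥ u) := by
  rw [mulVec_transpose, dotProduct_comm, ← dotProduct_mulVec]

/-- A real positive definite matrix is positive definite as a complex matrix. -/
lemma PosDef.map_complex {M : Matrix k k ℝ} (hM : M.PosDef) :
    (M.map Complex.ofReal).PosDef := by
  refine PosDef.of_dotProduct_mulVec_pos ?_ ?_
  · funext i j
    simp only [conjTranspose_apply, Matrix.map_apply, Complex.star_def, Complex.conj_ofReal]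
    exact congrArg Complex.ofReal (congrFun (congrFun hM.1 i) j)
  · intro x hx
    set a : k → ℝ := fun i => (x i).re with ha
    set b : k → ℝ := fun i => (x i).im with hb
    set ac : k → ℂ := fun i => ((a i : ℝ) : ℂ) with hac
    set bc : k → ℂ := fun i => ((b i : ℝ) : ℂ) with hbc
    have hxab : x = ac + Complex.I • bc := by
      funext i
      simp [hac, hbc, ha, hb, Complex.ext_iff]
    have hstar : star x = ac - Complex.I • bc := by
      funext i
      simp [hac, hbc, ha, hb, Complex.ext_iff]
    set Mc := M.map Complex.ofReal with hMc
    have hsym : a ⬝ᵥ (M *ᵥ b) = b ⬝ᵥ (M *ᵥ a) := by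
      have ht : Mᵀ = M := hM.1
      calc a ⬝ᵥ (M *ᵥ b) = a ⬝ᵥ (Mᵀ *ᵥ b) := by rw [ht]
        _ = b ⬝ᵥ (M *ᵥ a) := dot_transpose_s14 M a b
    have h1 : ac ⬝ᵥ (Mc *ᵥ ac) = ((a ⬝ᵥ (M *ᵥ a) : ℝ) : ℂ) := by
      rw [hac, hMc, mulVec_map_ofReal, dotProduct_map_ofReal]
    have h2 : ac ⬝ᵥ (Mc *ᵥ bc) = ((a ⬝ᵥ (M *ᵥ b) : ℝ) : ℂ) := by
      rw [hac, hbc, hMc, mulVec_map_ofReal, dotProduct_map_ofReal]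
    have h3 : bc ⬝ᵥ (Mc *ᵥ ac) = ((b ⬝ᵥ (M *ᵥ a) : ℝ) : ℂ) := by
      rw [hac, hbc, hMc, mulVec_map_ofReal, dotProduct_map_ofReal]
    have h4 : bc ⬝ᵥ (Mc *ᵥ bc) = ((b ⬝ᵥ (M *ᵥ b) : ℝ) : ℂ) := by
      rw [hbc, hMc, mulVec_map_ofReal, dotProduct_map_ofReal]
    have key : star x ⬝ᵥ (Mc *ᵥ x) = ((a ⬝ᵥ (M *ᵥ a) + b ⬝ᵥ (M *ᵥ b) : ℝ) : ℂ) := by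
      rw [hstar, hxab, mulVec_add, mulVec_smul]
      rw [dotProduct_add, sub_dotProduct, sub_dotProduct, dotProduct_smul, dotProduct_smul,
        smul_dotProduct, smul_dotProduct, h1, h2, h3, h4, hsym]
      push_cast
      simp only [smul_eq_mul]
      linear_combination (-((b ⬝ᵥ (M *ᵥ b) : ℝ) : ℂ)) * Complex.I_mul_I
    rw [key, Complex.zero_lt_real]
    have hbnonneg : 0 ≤ b ⬝ᵥ (M *ᵥ b) := by
      simpa using hM.posSemidef.dotProduct_mulVec_nonneg b
    have hanonneg : 0 ≤ a ⬝ᵥ (M *ᵥ a) := by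
      simpa using hM.posSemidef.dotProduct_mulVec_nonneg a
    by_cases hA : a = 0
    · have hB : b ≠ 0 := by
        intro hB
        apply hx
        rw [hxab, hac, hbc, hA, hB]
        funext i
        simp
      have := hM.dotProduct_mulVec_pos hB
      simp only [star_trivial] at this
      linarith
    · have := hM.dotProduct_mulVec_pos hA
      simp only [star_trivial] at this
      linarith

end Helpers

/-- 'Only if' direction of the stable-model parametrization: if the LMI
`M = [[HᵀE + EᵀH − P, FᵀH, Cᵀ], [HᵀF, P, 0], [C, 0, Σ_v]] > 0` holds, then `E` is
invertible and `A = E⁻¹F` is Schur stable, i.e. every (complex) eigenvalue `λ` of `A`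
satisfies `|λ| < 1`. -/
theorem stability_lmi_implies_schur_stable
    {n m : ℕ} (hn : 1 ≤ n) (hm : 1 ≤ m)
    (E F H P : Matrix (Fin n) (Fin n) ℝ)
    (C : Matrix (Fin m) (Fin n) ℝ) (Sv : Matrix (Fin m) (Fin m) ℝ)
    (hM : (Matrix.fromBlocks
        (Matrix.fromBlocks (Hᵀ * E + Eᵀ * H - P) (Fᵀ * H) (Hᵀ * F) P)
        (Matrix.fromRows Cᵀ 0)
        (Matrix.fromCols C 0)
        Sv).PosDef) :
    IsUnit E ∧
    ∀ z ∈ spectrum ℂ ((E⁻¹ * F).map (Complex.ofReal)), ‖z‖ < 1 := by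
  have hQ : (fromBlocks (Hᵀ * E + Eᵀ * H - P) (Fᵀ * H) (Hᵀ * F) P).PosDef :=
    posDef_toBlocks₁₁ hM
  have hK : (Hᵀ * E + Eᵀ * H - P).PosDef := posDef_toBlocks₁₁ hQ
  have hP : P.PosDef := posDef_toBlocks₂₂ hQ
  -- invertibility of E
  have hE : IsUnit E := by
    by_contra hEu
    have hdet : E.det = 0 := by
      by_contra hd
      exact hEu ((Matrix.isUnit_iff_isUnit_det E).mpr (isUnit_iff_ne_zero.mpr hd))
    obtain ⟨v, hv, hEv⟩ := (Matrix.exists_mulVec_eq_zero_iff).mpr hdet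
    have hpos := hK.dotProduct_mulVec_pos hv
    have hKv : v ⬝ᵥ ((Hᵀ * E + Eᵀ * H - P) *ᵥ v) = -(v ⬝ᵥ (P *ᵥ v)) := by
      rw [sub_mulVec, add_mulVec, ← mulVec_mulVec, ← mulVec_mulVec, hEv, mulVec_zero,
        zero_add, dotProduct_sub]
      rw [dot_transpose_s14 E v (H *ᵥ v), hEv, dotProduct_zero, zero_sub]
    have hPv := hP.dotProduct_mulVec_pos hv
    simp only [star_trivial] at hpos hPv
    rw [hKv] at hpos
    linarith
  refine ⟨hE, fun z hz => ?_⟩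
  have hdetE : IsUnit E.det := (Matrix.isUnit_iff_isUnit_det E).mp hE
  set Ec := E.map Complex.ofReal with hEc
  set Fc := F.map Complex.ofReal with hFc
  set Hc := H.map Complex.ofReal with hHc
  set Pc := P.map Complex.ofReal with hPc
  set Ac := (E⁻¹ * F).map Complex.ofReal with hAc
  have hEA : Ec * Ac = Fc := by
    rw [hEc, hAc, hFc, ← map_ofReal_mul,
      Matrix.mul_nonsing_inv_cancel_left (A := E) F hdetE]
  -- eigenvector
  rw [spectrum.mem_iff] at hz
  have hdet2 : (algebraMap ℂ (Matrix (Fin n) (Fin n) ℂ) z - Ac).det = 0 := by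
    by_contra hd
    exact hz ((Matrix.isUnit_iff_isUnit_det _).mpr (isUnit_iff_ne_zero.mpr hd))
  obtain ⟨w, hw, hNw⟩ := (Matrix.exists_mulVec_eq_zero_iff).mpr hdet2
  have hAw : Ac *ᵥ w = z • w := by
    rw [sub_mulVec, Algebra.algebraMap_eq_smul_one, smul_mulVec, one_mulVec] at hNw
    exact (sub_eq_zero.mp hNw).symm
  have hFw : Fc *ᵥ w = z • (Ec *ᵥ w) := by
    rw [← hEA, ← mulVec_mulVec, hAw, mulVec_smul]
  -- complexified positive definiteness
  have hQc : (fromBlocks ((Hᵀ * E + Eᵀ * H - P).map Complex.ofReal)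
      ((Fᵀ * H).map Complex.ofReal) ((Hᵀ * F).map Complex.ofReal)
      (P.map Complex.ofReal)).PosDef := by
    rw [← fromBlocks_map]
    exact PosDef.map_complex hQ
  have hKc : ((Hᵀ * E + Eᵀ * H - P).map Complex.ofReal).PosDef := PosDef.map_complex hK
  have hBc : (Fᵀ * H).map Complex.ofReal = Fcᵀ * Hc := by
    rw [map_ofReal_mul, Matrix.transpose_map, hFc, hHc]
  have hCc : (Hᵀ * F).map Complex.ofReal = Hcᵀ * Fc := by
    rw [map_ofReal_mul, Matrix.transpose_map, hHc, hFc]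
  have hKc2 : (Hᵀ * E + Eᵀ * H - P).map Complex.ofReal = Hcᵀ * Ec + Ecᵀ * Hc - Pc := by
    ext i j
    simp only [Matrix.map_apply, Matrix.sub_apply, Matrix.add_apply, Matrix.mul_apply,
      Matrix.transpose_apply, hEc, hFc, hHc, hPc]
    push_cast
    ring
  -- the quadratic form at the test vector
  set u : (Fin n ⊕ Fin n) → ℂ := Sum.elim w (-(z • w)) with hu
  have hune : u ≠ 0 := by
    intro hc
    exact hw (funext fun i => congrFun hc (Sum.inl i))
  have hval := hQc.dotProduct_mulVec_pos hune
  set a0 : ℂ := star w ⬝ᵥ ((Hcᵀ * Ec) *ᵥ w) with ha0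
  set b0 : ℂ := star w ⬝ᵥ ((Ecᵀ * Hc) *ᵥ w) with hb0
  set p0 : ℂ := star w ⬝ᵥ (Pc *ᵥ w) with hp0
  have hKcw : star w ⬝ᵥ (((Hᵀ * E + Eᵀ * H - P).map Complex.ofReal) *ᵥ w)
      = a0 + b0 - p0 := by
    rw [hKc2, sub_mulVec, add_mulVec, dotProduct_sub, dotProduct_add]
  have hEstar : Ec *ᵥ star w = star (Ec *ᵥ w) := by
    rw [hEc]; exact map_ofReal_mulVec_star E w
  have hFstar : Fc *ᵥ star w = star (Fc *ᵥ w) := by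
    rw [hFc]; exact map_ofReal_mulVec_star F w
  -- term 2
  have hstep3 : star w ⬝ᵥ ((Fcᵀ * Hc) *ᵥ w) = star z * b0 := by
    rw [← mulVec_mulVec, dot_transpose_s14 Fc (star w) (Hc *ᵥ w), hFstar, hFw, star_smul,
      ← hEstar, dotProduct_smul, smul_eq_mul, ← dot_transpose_s14 Ec (star w) (Hc *ᵥ w),
      mulVec_mulVec, ← hb0]
  have hterm2 : star w ⬝ᵥ ((Fcᵀ * Hc) *ᵥ (-(z • w)))
      = -(z * (star z * b0)) := by
    rw [mulVec_neg, mulVec_smul, dotProduct_neg, dotProduct_smul, smul_eq_mul, hstep3]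
  -- term 3
  have hterm3 : star (-(z • w)) ⬝ᵥ ((Hcᵀ * Fc) *ᵥ w)
      = -(star z * (z * a0)) := by
    rw [← mulVec_mulVec, hFw, mulVec_smul, star_neg, star_smul, neg_dotProduct,
      smul_dotProduct, dotProduct_smul, mulVec_mulVec, ← ha0]
    simp [smul_eq_mul]
  -- term 4
  have hterm4 : star (-(z • w)) ⬝ᵥ (Pc *ᵥ (-(z • w)))
      = star z * (z * p0) := by
    rw [mulVec_neg, mulVec_smul, star_neg, star_smul, neg_dotProduct, dotProduct_neg,
      neg_neg, smul_dotProduct, dotProduct_smul, ← hp0]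
    simp [smul_eq_mul]
  have hexp : star u ⬝ᵥ ((fromBlocks ((Hᵀ * E + Eᵀ * H - P).map Complex.ofReal)
      ((Fᵀ * H).map Complex.ofReal) ((Hᵀ * F).map Complex.ofReal)
      (P.map Complex.ofReal)) *ᵥ u)
      = (1 - z * star z) * (a0 + b0 - p0) := by
    rw [hu, Function.star_sumElim, fromBlocks_mulVec, sumElim_dotProduct_sumElim,
      dotProduct_add, dotProduct_add]
    simp only [Sum.elim_comp_inl, Sum.elim_comp_inr]
    rw [hKcw, hBc, hCc, hterm2, hterm3, hterm4]
    ring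
  rw [hexp] at hval
  have hc : 0 < a0 + b0 - p0 := by
    have := hKc.dotProduct_mulVec_pos hw
    rwa [hKcw] at this
  -- transfer to real inequalities
  rw [Complex.star_def, Complex.mul_conj] at hval
  rw [Complex.lt_def] at hval hc
  obtain ⟨hvre, hvim⟩ := hval
  obtain ⟨hcre, hcim⟩ := hc
  simp only [Complex.zero_re, Complex.zero_im] at hvre hvim hcre hcim
  have hre : (0:ℝ) < (1 - Complex.normSq z) * (a0 + b0 - p0).re := by
    have : ((1:ℂ) - (Complex.normSq z : ℂ)).im = 0 := by simp
    have hmul : (((1:ℂ) - (Complex.normSq z : ℂ)) * (a0 + b0 - p0)).re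
        = (1 - Complex.normSq z) * (a0 + b0 - p0).re := by
      rw [Complex.mul_re, this]
      simp
    rw [← hmul]
    exact hvre
  have hns : Complex.normSq z < 1 := by
    nlinarith
  have habs := Complex.sq_norm z
  nlinarith [norm_nonneg z]
end
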